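/- arXiv:2501.10306 — 2 statements merged into one kernel-verified Lean document; each statement's English description precedes it below -/
import Mathlib

section
/- Let u, T ∈ ℝ and let A be the 3×3 real matrix with rows (0, 1, 0), (−u², 2u, 1) and (−3uT², 3T², u). Then the characteristic polynomial of A is (λ − u)·((λ − u)² − 3T²), so the eigenvalues of A are λ₁ = u, λ₂ = u + √3·T and λ₃ = u − √3·T; if T ≠ 0 these three eigenvalues are real and pairwise distinct. -/
open Polynomial

lemma eig_iff_det (A : Matrix (Fin 3) (Fin 3) ℝ) (μ : ℝ) :
    Module.End.HasEigenvalue (Matrix.toLin' A) μ ↔ (A - μ • 1).det = 0 := by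
  rw [← Matrix.exists_mulVec_eq_zero_iff]
  rw [Module.End.hasEigenvalue_iff, Submodule.ne_bot_iff]
  constructor
  · rintro ⟨v, hv, hv0⟩
    rw [Module.End.mem_eigenspace_iff, Matrix.toLin'_apply] at hv
    exact ⟨v, hv0, by simp [Matrix.sub_mulVec, Matrix.smul_mulVec, hv]⟩
  · rintro ⟨v, hv0, hv⟩
    refine ⟨v, ?_, hv0⟩
    rw [Module.End.mem_eigenspace_iff, Matrix.toLin'_apply]
    rw [Matrix.sub_mulVec, Matrix.smul_mulVec, Matrix.one_mulVec, sub_eq_zero] at hv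
    exact hv

/-- For the third-order macroscopic matrix
`A = !![0, 1, 0; −u², 2u, 1; −3uT², 3T², u]`: the characteristic polynomial is
`(λ − u)·((λ − u)² − 3T²)`, the eigenvalues are exactly `u`, `u + √3·T` and
`u − √3·T`, and for `T ≠ 0` they are pairwise distinct. -/
theorem third_order_matrix_eigenvalues (u T : ℝ)
    (A : Matrix (Fin 3) (Fin 3) ℝ)
    (hA : A = !![0, 1, 0; -u ^ 2, 2 * u, 1; -3 * u * T ^ 2, 3 * T ^ 2, u]) :
    A.charpoly = (X - C u) * ((X - C u) ^ 2 - C (3 * T ^ 2)) ∧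
    (∀ μ : ℝ, Module.End.HasEigenvalue (Matrix.toLin' A) μ ↔
      (μ = u ∨ μ = u + Real.sqrt 3 * T ∨ μ = u - Real.sqrt 3 * T)) ∧
    (T ≠ 0 →
      u ≠ u + Real.sqrt 3 * T ∧ u ≠ u - Real.sqrt 3 * T ∧
      u + Real.sqrt 3 * T ≠ u - Real.sqrt 3 * T) := by
  have hs3 : Real.sqrt 3 ^ 2 = 3 := Real.sq_sqrt (by norm_num)
  have hs3pos : (0:ℝ) < Real.sqrt 3 := Real.sqrt_pos.mpr (by norm_num)
  refine ⟨?_, ?_, ?_⟩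
  · rw [Matrix.charpoly, Matrix.det_fin_three]
    simp [Matrix.charmatrix_apply_eq, Matrix.charmatrix_apply_ne, hA, map_ofNat]
    ring
  · intro μ
    have hB : A - μ • 1 =
        !![-μ, 1, 0; -u ^ 2, 2 * u - μ, 1; -3 * u * T ^ 2, 3 * T ^ 2, u - μ] := by
      rw [hA]; ext i j; fin_cases i <;> fin_cases j <;>
        simp [Matrix.one_apply]
    rw [eig_iff_det, hB, Matrix.det_fin_three]
    simp
    constructor
    · intro h
      have h' : (μ - u) * ((μ - u) ^ 2 - 3 * T ^ 2) = 0 := by nlinarith [h]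
      rcases mul_eq_zero.mp h' with h1 | h2
      · left; linarith [sub_eq_zero.mp h1]
      · have : (μ - u - Real.sqrt 3 * T) * (μ - u + Real.sqrt 3 * T) = 0 := by
          nlinarith [hs3]
        rcases mul_eq_zero.mp this with h3 | h4
        · right; left; nlinarith [h3]
        · right; right; nlinarith [h4]
    · rintro (h | h | h) <;> subst h <;>
        first
          | ring1
          | linear_combination (-(Real.sqrt 3) * T ^ 3) * hs3
          | linear_combination (Real.sqrt 3 * T ^ 3) * hs3
  · intro hT
    have h1 : Real.sqrt 3 * T ≠ 0 := mul_ne_zero (ne_of_gt hs3pos) hT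
    refine ⟨fun h => h1 (by linarith), fun h => h1 (by linarith), fun h => h1 (by linarith)⟩
end

section
/- Let ρ be a Borel probability measure on ℝ^d and let F : ℝ^d → ℝ be continuous and bounded from below. Then lim_{α→∞} ( −(1/α) · log ( ∫_{ℝ^d} exp(−α F(x)) dρ(x) ) ) = inf_{x ∈ supp(ρ)} F(x), where supp(ρ) denotes the topological support of the measure ρ. -/
open MeasureTheory Filter

/-- The support of a measure: the set of points all of whose neighbourhoods have
positive measure. -/
def measureSupport {E : Type*} [TopologicalSpace E] [MeasurableSpace E]
    (μ : Measure E) : Set E :=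
  {x : E | ∀ U ∈ nhds x, 0 < μ U}

/-- Laplace principle: for a Borel probability measure `ρ` on `ℝ^d` and a continuous,
bounded-below function `F`, `−(1/α) log ∫ exp(−α F) dρ → inf_{supp ρ} F` as `α → ∞`. -/
theorem laplace_principle (d : ℕ) (ρ : Measure (EuclideanSpace ℝ (Fin d)))
    [IsProbabilityMeasure ρ]
    (F : EuclideanSpace ℝ (Fin d) → ℝ) (hF : Continuous F)
    (hbd : BddBelow (Set.range F)) :
    Tendsto (fun α : ℝ => -(1 / α) * Real.log (∫ x, Real.exp (-α * F x) ∂ρ))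
      atTop (nhds (sInf (F '' measureSupport ρ))) := by
  set S := measureSupport ρ with hSdef
  -- the complement of the support is null
  have hSc : ρ Sᶜ = 0 := by
    apply measure_null_of_locally_null
    intro x hx
    simp only [hSdef, measureSupport, Set.mem_compl_iff, Set.mem_setOf_eq] at hx
    push_neg at hx
    obtain ⟨U, hU, hU0⟩ := hx
    exact ⟨U, nhdsWithin_le_nhds hU, le_antisymm hU0 zero_le⟩
  have hSmem : ∀ᵐ x ∂ρ, x ∈ S := by
    rw [ae_iff]
    exact hSc
  have hSne : S.Nonempty := by
    by_contra h
    rw [Set.not_nonempty_iff_eq_empty] at h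
    have h1 : ρ Set.univ = 0 := by
      rw [← Set.compl_empty, ← h]; exact hSc
    simp [measure_univ] at h1
  obtain ⟨B, hB⟩ := hbd
  have hBle : ∀ x, B ≤ F x := fun x => hB ⟨x, rfl⟩
  have himne : (F '' S).Nonempty := hSne.image F
  have himbd : BddBelow (F '' S) := ⟨B, by rintro y ⟨x, -, rfl⟩; exact hBle x⟩
  set m := sInf (F '' S) with hm
  have hmle : ∀ x ∈ S, m ≤ F x := fun x hx => csInf_le himbd ⟨x, hx, rfl⟩
  -- integrability
  have hcont : ∀ α : ℝ, Continuous fun x => Real.exp (-α * F x) :=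
    fun α => Real.continuous_exp.comp (continuous_const.mul hF)
  have hint : ∀ α : ℝ, 0 ≤ α → Integrable (fun x => Real.exp (-α * F x)) ρ := by
    intro α hα
    refine Integrable.mono' (integrable_const (Real.exp (-α * B)))
      (hcont α).aestronglyMeasurable (Filter.Eventually.of_forall fun x => ?_)
    rw [Real.norm_eq_abs, abs_of_pos (Real.exp_pos _)]
    exact Real.exp_le_exp.2 (by nlinarith [hBle x])
  -- upper bound on the integral
  have hub : ∀ α : ℝ, 0 ≤ α → ∫ x, Real.exp (-α * F x) ∂ρ ≤ Real.exp (-α * m) := by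
    intro α hα
    calc ∫ x, Real.exp (-α * F x) ∂ρ ≤ ∫ _x, Real.exp (-α * m) ∂ρ := by
          refine integral_mono_ae (hint α hα) (integrable_const _) ?_
          filter_upwards [hSmem] with x hx
          exact Real.exp_le_exp.2 (by nlinarith [hmle x hx])
      _ = Real.exp (-α * m) := by simp
  -- lower bound on the integral
  have hlb : ∀ t, m < t → ∃ c : ℝ, 0 < c ∧ ∀ α : ℝ, 0 ≤ α →
      Real.exp (-α * t) * c ≤ ∫ x, Real.exp (-α * F x) ∂ρ := by
    intro t ht
    obtain ⟨y, ⟨x₀, hx₀S, rfl⟩, hy⟩ := exists_lt_of_csInf_lt himne ht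
    set U := F ⁻¹' Set.Iio t with hU
    have hUopen : IsOpen U := hF.isOpen_preimage _ isOpen_Iio
    have hUnhds : U ∈ nhds x₀ := hUopen.mem_nhds hy
    have hUpos : 0 < ρ U := hx₀S U hUnhds
    have hUfin : ρ U ≠ ⊤ := (measure_lt_top ρ U).ne
    refine ⟨(ρ U).toReal, ENNReal.toReal_pos hUpos.ne' hUfin, fun α hα => ?_⟩
    have h1 : ∫ _x in U, Real.exp (-α * t) ∂ρ ≤ ∫ x in U, Real.exp (-α * F x) ∂ρ := by
      refine setIntegral_mono_on (integrable_const _).integrableOn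
        ((hint α hα).integrableOn) hUopen.measurableSet fun x hx => ?_
      have hxt : F x < t := hx
      exact Real.exp_le_exp.2 (by nlinarith)
    have h2 : ∫ x in U, Real.exp (-α * F x) ∂ρ ≤ ∫ x, Real.exp (-α * F x) ∂ρ :=
      setIntegral_le_integral (hint α hα)
        (Filter.Eventually.of_forall fun x => (Real.exp_pos _).le)
    calc Real.exp (-α * t) * (ρ U).toReal
        = ∫ _x in U, Real.exp (-α * t) ∂ρ := by
          rw [setIntegral_const, smul_eq_mul, Measure.real_def]; ring
      _ ≤ _ := h1.trans h2
  -- positivity of the integral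
  have hpos : ∀ α : ℝ, 0 ≤ α → 0 < ∫ x, Real.exp (-α * F x) ∂ρ := by
    obtain ⟨c, hc, h⟩ := hlb (m + 1) (by linarith)
    exact fun α hα => lt_of_lt_of_le (by positivity) (h α hα)
  rw [tendsto_order]
  constructor
  · intro a ha
    filter_upwards [eventually_gt_atTop 0] with α hα
    have h1 := hub α hα.le
    have h2 := hpos α hα.le
    have hlog : Real.log (∫ x, Real.exp (-α * F x) ∂ρ) ≤ -α * m := by
      rw [← Real.log_exp (-α * m)]
      exact Real.log_le_log h2 h1
    have hαα : (1 / α) * α = 1 := one_div_mul_cancel hα.ne'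
    have hα' : (0:ℝ) < 1 / α := by positivity
    calc a < m := ha
      _ ≤ -(1 / α) * Real.log (∫ x, Real.exp (-α * F x) ∂ρ) := by
        have h3 := mul_le_mul_of_nonneg_left hlog hα'.le
        have h4 : (1 / α) * (-α * m) = -m := by field_simp
        linarith
  · intro b hb
    obtain ⟨c, hc, h⟩ := hlb ((m + b) / 2) (by linarith)
    have htend : Tendsto (fun α : ℝ => (m + b) / 2 - Real.log c / α) atTop
        (nhds ((m + b) / 2)) := by
      have : Tendsto (fun α : ℝ => Real.log c / α) atTop (nhds 0) :=
        Tendsto.div_atTop tendsto_const_nhds tendsto_id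
      simpa using tendsto_const_nhds.sub this
    have hev : ∀ᶠ α : ℝ in atTop, (m + b) / 2 - Real.log c / α < b :=
      htend.eventually_lt_const (by linarith)
    filter_upwards [hev, eventually_gt_atTop 0] with α hα1 hα
    have hlog : -α * ((m + b) / 2) + Real.log c
        ≤ Real.log (∫ x, Real.exp (-α * F x) ∂ρ) := by
      rw [← Real.log_exp (-α * ((m + b) / 2)), ← Real.log_mul (Real.exp_pos _).ne' hc.ne']
      exact Real.log_le_log (by positivity) (h α hα.le)
    have hαα : (1 / α) * α = 1 := one_div_mul_cancel hα.ne'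
    have hα' : (0:ℝ) < 1 / α := by positivity
    have key : -(1 / α) * Real.log (∫ x, Real.exp (-α * F x) ∂ρ)
        ≤ (m + b) / 2 - Real.log c / α := by
      have h3 := mul_le_mul_of_nonneg_left hlog hα'.le
      have h4 : (1 / α) * (-α * ((m + b) / 2) + Real.log c)
          = -((m + b) / 2) + Real.log c / α := by field_simp
      linarith
    linarith
end
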